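/- Let h1(r) = 2r/(r²+1), h3(r) = (r²−1)/(r²+1), Q(r) = (h1(r), 0, h3(r)). Then for all r > 0, Q''(r) + r^{−1}Q'(r) + r^{−2}R²Q(r) = κ(r)Q(r) with κ(r) = −2h1(r)²/r². Consequently, the map u(x) = e^{θR}Q(r) (in polar coordinates x = (r cos θ, r sin θ)) satisfies u × Δu = 0 on ℝ² ∖ {0}, i.e. φ = e^{θR}Q is a stationary solution of the Schrödinger map equation. -/

import Mathlib

noncomputable section
open MeasureTheory Real Set Filter
open scoped RealInnerProductSpace Topology

/-- The plane `ℝ²` with its Euclidean structure. -/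
abbrev V2 : Type := EuclideanSpace ℝ (Fin 2)
/-- The space `ℝ³` with its Euclidean structure. -/
abbrev V3 : Type := EuclideanSpace ℝ (Fin 3)

/-- The point `(a, b) ∈ ℝ²`. -/
def pt2 (a b : ℝ) : V2 := WithLp.toLp 2 ![a, b]

/-- The cross product in `ℝ³`. -/
def cross (u v : V3) : V3 :=
  WithLp.toLp 2 ![u 1 * v 2 - u 2 * v 1, u 2 * v 0 - u 0 * v 2, u 0 * v 1 - u 1 * v 0]

/-- `e^{θR}`: rotation by angle `θ` about the `x₃`-axis. -/
def rot3 (θ : ℝ) (v : V3) : V3 :=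
  WithLp.toLp 2 ![Real.cos θ * v 0 - Real.sin θ * v 1, Real.sin θ * v 0 + Real.cos θ * v 1, v 2]

/-- The generator `R` of horizontal rotations, `Rv = k × v` with `k = (0,0,1)`. -/
def Rgen (v : V3) : V3 := WithLp.toLp 2 ![-(v 1), v 0, 0]

/-- Directional (partial) derivative of a map `ℝ² → ℝ³` in direction `e`. -/
def pd (e : V2) (f : V2 → V3) (x : V2) : V3 := fderiv ℝ f x e

/-- The componentwise Laplacian on `ℝ²`. -/
def lap (f : V2 → V3) (x : V2) : V3 :=
  pd (pt2 1 0) (pd (pt2 1 0) f) x + pd (pt2 0 1) (pd (pt2 0 1) f) x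

/-- Squared homogeneous Sobolev seminorm `‖f‖_{Ḣ^k}² = ∫ |∇^k f|²`. -/
def sobSq (k : ℕ) (f : V2 → V3) : ℝ := ∫ x : V2, ‖iteratedFDeriv ℝ k f x‖ ^ 2

/-- The degree one harmonic map `φ(x) = e^{θR} Q(r)`,
`Q = (h₁, 0, h₃)`, `h₁(r) = 2r/(r²+1)`, `h₃(r) = (r²-1)/(r²+1)`. -/
def phi1 (x : V2) : V3 :=
  WithLp.toLp 2 ![2 * x 0 / (x 0 ^ 2 + x 1 ^ 2 + 1), 2 * x 1 / (x 0 ^ 2 + x 1 ^ 2 + 1),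
    (x 0 ^ 2 + x 1 ^ 2 - 1) / (x 0 ^ 2 + x 1 ^ 2 + 1)]

/-- The harmonic map profile `Q(r) = (h₁(r), 0, h₃(r))`. -/
def Qmap (r : ℝ) : V3 := WithLp.toLp 2 ![2 * r / (r ^ 2 + 1), 0, (r ^ 2 - 1) / (r ^ 2 + 1)]

namespace QmapHarmonicAux

private lemma hasDerivAt_V3 {F : ℝ → V3} {a b c : ℝ} {r : ℝ}
    (h0 : HasDerivAt (fun t => F t 0) a r)
    (h1 : HasDerivAt (fun t => F t 1) b r)
    (h2 : HasDerivAt (fun t => F t 2) c r) :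
    HasDerivAt F (WithLp.toLp 2 ![a, b, c] : V3) r := by
  have hF : HasDerivAt (fun t => (fun i => F t i : Fin 3 → ℝ)) ![a, b, c] r :=
    hasDerivAt_pi.mpr (by intro i; fin_cases i <;> simpa)
  exact ((PiLp.continuousLinearEquiv 2 ℝ fun _ : Fin 3 => ℝ).symm.hasFDerivAt).comp_hasDerivAt r hF

private lemma pdV3 {F : V2 → V3} {a b c : V2 →L[ℝ] ℝ} {x : V2}
    (h0 : HasFDerivAt (fun y => F y 0) a x)
    (h1 : HasFDerivAt (fun y => F y 1) b x)
    (h2 : HasFDerivAt (fun y => F y 2) c x) (e : V2) :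
    pd e F x = WithLp.toLp 2 ![a e, b e, c e] := by
  have hF : HasFDerivAt (fun y => (fun i => F y i : Fin 3 → ℝ))
      (ContinuousLinearMap.pi ![a, b, c]) x :=
    hasFDerivAt_pi.mpr (by intro i; fin_cases i <;> simpa)
  have hG : HasFDerivAt F
      (((PiLp.continuousLinearEquiv 2 ℝ fun _ : Fin 3 => ℝ).symm :
        (Fin 3 → ℝ) ≃L[ℝ] V3).toContinuousLinearMap.comp (ContinuousLinearMap.pi ![a, b, c])) x :=
    ((PiLp.continuousLinearEquiv 2 ℝ fun _ : Fin 3 => ℝ).symm.hasFDerivAt).comp x hF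
  rw [pd, hG.fderiv]
  ext i; fin_cases i <;> rfl

/-! ### Part 1: the radial ODE -/

private def Qd (r : ℝ) : V3 := WithLp.toLp 2 ![(2 - 2 * r ^ 2) / (r ^ 2 + 1) ^ 2, 0, 4 * r / (r ^ 2 + 1) ^ 2]

private lemma hs' (r : ℝ) : HasDerivAt (fun t : ℝ => t ^ 2 + 1) (2 * r) r := by
  simpa using (hasDerivAt_pow 2 r).add_const 1

private lemma sne (r : ℝ) : r ^ 2 + 1 ≠ 0 := by positivity

private lemma deriv_Qmap : deriv Qmap = Qd := by
  funext r
  have h1 : HasDerivAt (fun t : ℝ => 2 * t / (t ^ 2 + 1))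
      ((2 * 1 * (r ^ 2 + 1) - 2 * r * (2 * r)) / (r ^ 2 + 1) ^ 2) r :=
    ((hasDerivAt_id r).const_mul 2).div (hs' r) (sne r)
  have h2 : HasDerivAt (fun _ : ℝ => (0 : ℝ)) 0 r := hasDerivAt_const r 0
  have h3 : HasDerivAt (fun t : ℝ => (t ^ 2 - 1) / (t ^ 2 + 1))
      ((2 * r ^ 1 * (r ^ 2 + 1) - (r ^ 2 - 1) * (2 * r)) / (r ^ 2 + 1) ^ 2) r :=
    ((hasDerivAt_pow 2 r).sub_const 1).div (hs' r) (sne r)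
  rw [(hasDerivAt_V3 h1 h2 h3).deriv]
  ext i
  fin_cases i <;> simp [Qd] <;>
    first
    | rfl
    | (rw [div_eq_div_iff (by positivity) (by positivity)]; ring)

private lemma part1 (r : ℝ) (hr : 0 < r) :
    deriv (deriv Qmap) r + r⁻¹ • deriv Qmap r + (r ^ 2)⁻¹ • Rgen (Rgen (Qmap r)) =
      (-(2 * (2 * r / (r ^ 2 + 1)) ^ 2) / r ^ 2) • Qmap r := by
  have sne2 : ((r : ℝ) ^ 2 + 1) ^ 2 ≠ 0 := by positivity
  have hden : HasDerivAt (fun t : ℝ => (t ^ 2 + 1) ^ 2)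
      (2 * (r ^ 2 + 1) ^ 1 * (2 * r)) r := (hs' r).pow 2
  have h1 : HasDerivAt (fun t : ℝ => (2 - 2 * t ^ 2) / (t ^ 2 + 1) ^ 2)
      ((-(2 * (2 * r ^ 1)) * (r ^ 2 + 1) ^ 2 - (2 - 2 * r ^ 2) * (2 * (r ^ 2 + 1) ^ 1 * (2 * r))) /
        ((r ^ 2 + 1) ^ 2) ^ 2) r := by
    have : HasDerivAt (fun t : ℝ => 2 - 2 * t ^ 2) (-(2 * (2 * r ^ 1))) r := by
      simpa using (((hasDerivAt_pow 2 r).const_mul 2).const_sub 2)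
    exact this.div hden sne2
  have h2 : HasDerivAt (fun _ : ℝ => (0 : ℝ)) 0 r := hasDerivAt_const r 0
  have h3 : HasDerivAt (fun t : ℝ => 4 * t / (t ^ 2 + 1) ^ 2)
      ((4 * 1 * (r ^ 2 + 1) ^ 2 - 4 * r * (2 * (r ^ 2 + 1) ^ 1 * (2 * r))) /
        ((r ^ 2 + 1) ^ 2) ^ 2) r := ((hasDerivAt_id r).const_mul 4).div hden sne2
  rw [deriv_Qmap, (hasDerivAt_V3 (F := Qd) h1 h2 h3).deriv]
  have hr0 : r ≠ 0 := ne_of_gt hr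
  ext i
  fin_cases i <;>
    simp [Qd, Qmap, Rgen, PiLp.add_apply, PiLp.smul_apply, smul_eq_mul] <;>
    field_simp <;> ring

/-! ### Part 2: the full harmonic map identity -/

private def P1 (y : V2) : V3 :=
  WithLp.toLp 2 ![(2 - 2 * y 0 ^ 2 + 2 * y 1 ^ 2) / (y 0 ^ 2 + y 1 ^ 2 + 1) ^ 2,
    -4 * y 0 * y 1 / (y 0 ^ 2 + y 1 ^ 2 + 1) ^ 2,
    4 * y 0 / (y 0 ^ 2 + y 1 ^ 2 + 1) ^ 2]
private def P2 (y : V2) : V3 :=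
  WithLp.toLp 2 ![-4 * y 0 * y 1 / (y 0 ^ 2 + y 1 ^ 2 + 1) ^ 2,
    (2 + 2 * y 0 ^ 2 - 2 * y 1 ^ 2) / (y 0 ^ 2 + y 1 ^ 2 + 1) ^ 2,
    4 * y 1 / (y 0 ^ 2 + y 1 ^ 2 + 1) ^ 2]

private lemma hpa (x : V2) :
    HasFDerivAt (fun y : V2 => y 0) (EuclideanSpace.proj 0 : V2 →L[ℝ] ℝ) x := by
  have h := (EuclideanSpace.proj (0 : Fin 2) : V2 →L[ℝ] ℝ).hasFDerivAt (x := x); exact h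

private lemma hpb (x : V2) :
    HasFDerivAt (fun y : V2 => y 1) (EuclideanSpace.proj 1 : V2 →L[ℝ] ℝ) x := by
  have h := (EuclideanSpace.proj (1 : Fin 2) : V2 →L[ℝ] ℝ).hasFDerivAt (x := x); exact h

private lemma Sne (x : V2) : x 0 ^ 2 + x 1 ^ 2 + 1 ≠ 0 := by positivity

set_option maxHeartbeats 1000000 in
private lemma hphi0 : pd (pt2 1 0) phi1 = P1 ∧ pd (pt2 0 1) phi1 = P2 := by
  constructor <;> funext x <;>
  · have hp2a := (hasDerivAt_pow 2 (x 0)).comp_hasFDerivAt x (hpa x)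
    have hp2b := (hasDerivAt_pow 2 (x 1)).comp_hasFDerivAt x (hpb x)
    have hS := (hp2a.add hp2b).add_const 1
    have hinv := (hasDerivAt_inv (Sne x)).comp_hasFDerivAt x hS
    have hc1 := ((hpa x).const_mul 2).mul hinv
    have hc2 := ((hpb x).const_mul 2).mul hinv
    have hc3 := ((hp2a.add hp2b).sub_const 1).mul hinv
    rw [pdV3 (F := phi1) hc1 hc2 hc3 _]
    have hs0 := Sne x
    ext i
    fin_cases i <;>
      simp only [P1, P2, pt2, ContinuousLinearMap.add_apply, ContinuousLinearMap.smul_apply,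
        smul_eq_mul, PiLp.proj_apply, Matrix.cons_val_zero, Matrix.cons_val_one,
        Matrix.head_cons, Matrix.cons_val_succ, Fin.isValue, PiLp.toLp_apply, WithLp.ofLp_toLp, Fin.zero_eta, Fin.mk_one, Fin.reduceFinMk, Matrix.cons_val, Function.comp_apply, Pi.add_apply] <;>
      field_simp <;> ring

private lemma Sqne (x : V2) : (x 0 ^ 2 + x 1 ^ 2 + 1) ^ 2 ≠ 0 := by positivity

set_option maxHeartbeats 4000000 in
private lemma cross_phi (x : V2) : cross (phi1 x) (lap phi1 x) = 0 := by
  have hp2a := (hasDerivAt_pow 2 (x 0)).comp_hasFDerivAt x (hpa x)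
  have hp2b := (hasDerivAt_pow 2 (x 1)).comp_hasFDerivAt x (hpb x)
  have hS := (hp2a.add hp2b).add_const 1
  have hSq := (hasDerivAt_pow 2 (x 0 ^ 2 + x 1 ^ 2 + 1)).comp_hasFDerivAt x hS
  have hinv2 := (hasDerivAt_inv (Sqne x)).comp_hasFDerivAt x hSq
  have h11 := (((hp2a.const_mul 2).const_sub 2).add (hp2b.const_mul 2)).mul hinv2
  have h12 := (((hpa x).const_mul (-4)).mul (hpb x)).mul hinv2
  have h13 := ((hpa x).const_mul 4).mul hinv2
  have h21 := (((hp2a.const_mul 2).const_add 2).sub (hp2b.const_mul 2)).mul hinv2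
  have h23 := ((hpb x).const_mul 4).mul hinv2
  have hs0 := Sne x
  rw [cross, lap, hphi0.1, hphi0.2, pdV3 (F := P1) h11 h12 h13 (pt2 1 0),
    pdV3 (F := P2) h12 h21 h23 (pt2 0 1)]
  ext i
  fin_cases i <;>
    simp only [phi1, pt2, PiLp.add_apply, ContinuousLinearMap.add_apply,
      ContinuousLinearMap.smul_apply, ContinuousLinearMap.neg_apply,
      ContinuousLinearMap.sub_apply, smul_eq_mul, PiLp.proj_apply,
      Matrix.cons_val_zero, Matrix.cons_val_one, Matrix.head_cons, Matrix.cons_val_succ,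
      Fin.isValue, PiLp.zero_apply, PiLp.toLp_apply, WithLp.ofLp_toLp, Fin.zero_eta, Fin.mk_one, Fin.reduceFinMk, Matrix.cons_val, Function.comp_apply, Pi.add_apply, Pi.sub_apply, Pi.mul_apply] <;>
    field_simp <;> ring

end QmapHarmonicAux

/-- `Q'' + r⁻¹ Q' + r⁻² R²Q = κ Q` with `κ(r) = -2h₁(r)²/r²`, and consequently
`φ = e^{θR}Q` satisfies `φ × Δφ = 0` away from the origin. -/
theorem Qmap_harmonic :
    (∀ r : ℝ, 0 < r →
      deriv (deriv Qmap) r + r⁻¹ • deriv Qmap r + (r ^ 2)⁻¹ • Rgen (Rgen (Qmap r)) =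
        (-(2 * (2 * r / (r ^ 2 + 1)) ^ 2) / r ^ 2) • Qmap r) ∧
    (∀ x : V2, x ≠ 0 → cross (phi1 x) (lap phi1 x) = 0) := by
  exact ⟨fun r hr => QmapHarmonicAux.part1 r hr, fun x _ => QmapHarmonicAux.cross_phi x⟩
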